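/- For vertices p and q in the same component G_m of a graph where additional inter-component edges have been added only between distinct components, the shortest path between p and q in the augmented graph may be shorter than in G_m only if the path uses at least two inter-component edges; if all inter-component edges have weight at least the diameter of G_m, intra-component shortest distances are unchanged. -/

import Mathlib

open SimpleGraph ENNReal

/-- Total weight of a walk in a weighted graph. -/
noncomputable def walkWeight {V : Type*} {G : SimpleGraph V} (w : V → V → ℝ≥0∞)
    {u v : V} (p : G.Walk u v) : ℝ≥0∞ :=
  (p.darts.map (fun d => w d.toProd.1 d.toProd.2)).sum

/-- Weighted shortest-path distance: infimum of walk weights. -/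
noncomputable def wdist {V : Type*} (G : SimpleGraph V) (w : V → V → ℝ≥0∞)
    (u v : V) : ℝ≥0∞ :=
  ⨅ p : G.Walk u v, walkWeight w p

lemma walkWeight_nil {V : Type*} {G : SimpleGraph V} (w : V → V → ℝ≥0∞) {u : V} :
    walkWeight w (SimpleGraph.Walk.nil : G.Walk u u) = 0 := rfl

lemma walkWeight_cons {V : Type*} {G : SimpleGraph V} (w : V → V → ℝ≥0∞) {u v x : V}
    (h : G.Adj u v) (p : G.Walk v x) :
    walkWeight w (SimpleGraph.Walk.cons h p) = w u v + walkWeight w p := by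
  simp [walkWeight]

lemma wdist_le {V : Type*} {G : SimpleGraph V} (w : V → V → ℝ≥0∞) {u v : V}
    (p : G.Walk u v) : wdist G w u v ≤ walkWeight w p := iInf_le _ _

lemma wdist_self {V : Type*} (G : SimpleGraph V) (w : V → V → ℝ≥0∞) (u : V) :
    wdist G w u u = 0 :=
  le_antisymm (le_trans (wdist_le w SimpleGraph.Walk.nil) (le_of_eq (walkWeight_nil w)))
    (zero_le)

lemma wdist_triangle {V : Type*} (G : SimpleGraph V) (w : V → V → ℝ≥0∞) (u x v : V) :
    wdist G w u v ≤ wdist G w u x + wdist G w x v := by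
  have : wdist G w u x + wdist G w x v
      = ⨅ p : G.Walk u x, ⨅ q : G.Walk x v, walkWeight w p + walkWeight w q := by
    rw [wdist, wdist, ENNReal.iInf_add]
    exact iInf_congr fun p => ENNReal.add_iInf
  rw [this]
  refine le_iInf fun p => le_iInf fun q => ?_
  refine le_trans (wdist_le w (p.append q)) (le_of_eq ?_)
  simp [walkWeight, SimpleGraph.Walk.darts_append]

/-- If the component `G₁` (= `G_m`) of a weighted graph is augmented by other
components and inter-component edges, each of weight at least the diameter of
`G₁`, then intra-component shortest-path distances are unchanged. -/
theorem intra_component_distances_unchanged {V₁ V₂ : Type*}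
    (G : SimpleGraph (V₁ ⊕ V₂)) (G₁ : SimpleGraph V₁)
    (w : (V₁ ⊕ V₂) → (V₁ ⊕ V₂) → ℝ≥0∞)
    (w₁ : V₁ → V₁ → ℝ≥0∞) (hw₁ : w₁ = fun a b => w (.inl a) (.inl b))
    (h11 : ∀ a b, G.Adj (.inl a) (.inl b) ↔ G₁.Adj a b)
    (hsymm : ∀ x y, w x y = w y x)
    (hc1 : G₁.Connected)
    (D : ℝ≥0∞) (hD : D = ⨆ u, ⨆ v, wdist G₁ w₁ u v) (hDfin : D ≠ ⊤)
    (hinter : ∀ (a : V₁) (b : V₂), G.Adj (.inl a) (.inr b) → D ≤ w (.inl a) (.inr b)) :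
    ∀ p q : V₁, wdist G w (.inl p) (.inl q) = wdist G₁ w₁ p q := by
  have hle_D : ∀ p q : V₁, wdist G₁ w₁ p q ≤ D := by
    intro p q
    rw [hD]
    exact le_trans (le_iSup _ q) (le_iSup (fun u => ⨆ v, wdist G₁ w₁ u v) p)
  -- F x y : required lower bound for the weight of any G-walk from x to y
  set F : (V₁ ⊕ V₂) → (V₁ ⊕ V₂) → ℝ≥0∞ := fun x y =>
    Sum.elim (fun p => Sum.elim (fun q => wdist G₁ w₁ p q) (fun _ => 0) y)
      (fun _ => Sum.elim (fun _ => D) (fun _ => 0) y) x with hF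
  have key : ∀ x y : V₁ ⊕ V₂, ∀ P : G.Walk x y, F x y ≤ walkWeight w P := by
    intro x y P
    induction P with
    | nil =>
      rename_i z
      cases z <;> simp [hF, walkWeight_nil, wdist_self]
    | cons h P ih =>
      rename_i a b y
      rw [walkWeight_cons]
      match a, b with
      | Sum.inl p, Sum.inl r =>
        cases y with
        | inl q =>
          simp only [hF, Sum.elim_inl] at ih ⊢
          calc wdist G₁ w₁ p q ≤ wdist G₁ w₁ p r + wdist G₁ w₁ r q :=
                wdist_triangle _ _ _ _ _
            _ ≤ w (Sum.inl p) (Sum.inl r) + walkWeight w P := by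
                refine add_le_add ?_ ih
                refine le_trans (wdist_le w₁ (SimpleGraph.Walk.cons ((h11 p r).1 h)
                  SimpleGraph.Walk.nil)) ?_
                simp [walkWeight_cons, walkWeight_nil, hw₁]
        | inr bb => simp [hF]
      | Sum.inl p, Sum.inr b =>
        cases y with
        | inl q =>
          simp only [hF, Sum.elim_inl]
          exact le_trans (hle_D p q) (le_trans (hinter p b h) (le_add_right le_rfl))
        | inr b' => simp [hF]
      | Sum.inr b, Sum.inl r =>
        cases y with
        | inl q =>
          simp only [hF, Sum.elim_inr, Sum.elim_inl]
          have : D ≤ w (Sum.inr b) (Sum.inl r) := by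
            rw [hsymm]; exact hinter r b h.symm
          exact le_trans this (le_add_right le_rfl)
        | inr b' => simp [hF]
      | Sum.inr b, Sum.inr b' =>
        cases y with
        | inl q =>
          simp only [hF, Sum.elim_inr, Sum.elim_inl] at ih ⊢
          exact le_trans ih (le_add_left le_rfl)
        | inr b'' => simp [hF]
  intro p q
  refine le_antisymm ?_ ?_
  · -- map walks of G₁ into G
    refine le_iInf fun P => ?_
    let f : G₁ →g G := ⟨Sum.inl, fun hadj => (h11 _ _).2 hadj⟩
    have h1 : wdist G w (Sum.inl p) (Sum.inl q) ≤ walkWeight w (P.map f) :=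
      wdist_le w (P.map f)
    refine le_trans h1 (le_of_eq ?_)
    simp only [walkWeight, SimpleGraph.Walk.darts_map, List.map_map]
    congr 1
    refine List.map_congr_left fun d _ => ?_
    cases d with
    | mk t _ =>
      show w (f t.1) (f t.2) = w₁ t.1 t.2
      rw [hw₁]
      rfl
  · refine le_iInf fun P => ?_
    simpa [hF] using key (Sum.inl p) (Sum.inl q) P
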